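/- Let A be an associative unital ℝ-algebra, n a real number, and d, δ, x, y, Δ, Q, N elements of A satisfying: d·d = 0, δ·δ = 0, x·x = 0, y·y = 0, d·x + x·d = 0, δ·y + y·δ = 0, d·δ + δ·d = Δ, x·y + y·x = Q, (d·y + y·d) − (δ·x + x·δ) = 2N + (n+2)·1, Δ·d = d·Δ, Δ·δ = δ·Δ, Δ·x − x·Δ = −2d, Δ·y − y·Δ = 2δ, N·d − d·N = −d, N·δ − δ·N = −δ, N·x − x·N = x, N·y − y·N = y, and N·Δ − Δ·N = −2Δ. Define εD := d·(n·1 + 2N − 2·1) + x·Δ and ιD := −δ·(n·1 + 2N − 2·1) + y·Δ. Then εD·εD = 0, ιD·ιD = 0, and ιD·εD + εD·ιD = Q·Δ². -/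
import Mathlib


/-- The operator `ε(𝔻) = d̃(n + 2∇_𝕏 − 2) + ε(𝕏)Δ̃` of Branson–Gover, modelled in
an abstract associative `ℝ`-algebra. -/
def epsD {A : Type*} [Ring A] [Algebra ℝ A] (n : ℝ) (d x Δ N : A) : A :=
  d * (n • (1 : A) + (2 : ℝ) • N - (2 : ℝ) • (1 : A)) + x * Δ

/-- The operator `ι(𝔻) = −δ̃(n + 2∇_𝕏 − 2) + ι(𝕏)Δ̃` of Branson–Gover, modelled in
an abstract associative `ℝ`-algebra. -/
def iotaD {A : Type*} [Ring A] [Algebra ℝ A] (n : ℝ) (δ y Δ N : A) : A :=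
  -(δ * (n • (1 : A) + (2 : ℝ) • N - (2 : ℝ) • (1 : A))) + y * Δ

set_option maxHeartbeats 2000000 in
/-- Proposition 3.3 of Branson–Gover: from the (anti)commutation relations of
Tables 1–2 one has `ι(𝔻)ι(𝔻) = 0`, `ε(𝔻)ε(𝔻) = 0`, and
`ι(𝔻)ε(𝔻) + ε(𝔻)ι(𝔻) = Q Δ̃²`. -/
theorem stmt_12
    {A : Type*} [Ring A] [Algebra ℝ A]
    (n : ℝ) (d δ x y Δ Q N : A)
    (h₁ : d * d = 0) (h₂ : δ * δ = 0) (h₃ : x * x = 0) (h₄ : y * y = 0)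
    (h₅ : d * x + x * d = 0) (h₆ : δ * y + y * δ = 0)
    (h₇ : d * δ + δ * d = Δ) (h₈ : x * y + y * x = Q)
    (h₉ : (d * y + y * d) - (δ * x + x * δ) =
      (2 : ℝ) • N + (n + 2) • (1 : A))
    (h₁₀ : Δ * d = d * Δ) (h₁₁ : Δ * δ = δ * Δ)
    (h₁₂ : Δ * x - x * Δ = -((2 : ℝ) • d))
    (h₁₃ : Δ * y - y * Δ = (2 : ℝ) • δ)
    (h₁₄ : N * d - d * N = -d) (h₁₅ : N * δ - δ * N = -δ)
    (h₁₆ : N * x - x * N = x) (h₁₇ : N * y - y * N = y)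
    (h₁₈ : N * Δ - Δ * N = -((2 : ℝ) • Δ)) :
    epsD n d x Δ N * epsD n d x Δ N = 0 ∧
    iotaD n δ y Δ N * iotaD n δ y Δ N = 0 ∧
    iotaD n δ y Δ N * epsD n d x Δ N + epsD n d x Δ N * iotaD n δ y Δ N =
      Q * Δ ^ 2 := by
  simp only [epsD, iotaD]
  set M := n • (1 : A) + (2 : ℝ) • N - (2 : ℝ) • (1 : A) with hMdef
  have hMd : M * d = d * M - (2:ℝ) • d := by
    rw [hMdef]; linear_combination (norm := (noncomm_ring; try module)) (2:ℝ) • h₁₄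
  have hMδ : M * δ = δ * M - (2:ℝ) • δ := by
    rw [hMdef]; linear_combination (norm := (noncomm_ring; try module)) (2:ℝ) • h₁₅
  have hMx : M * x = x * M + (2:ℝ) • x := by
    rw [hMdef]; linear_combination (norm := (noncomm_ring; try module)) (2:ℝ) • h₁₆
  have hMy : M * y = y * M + (2:ℝ) • y := by
    rw [hMdef]; linear_combination (norm := (noncomm_ring; try module)) (2:ℝ) • h₁₇
  have h₁₈' : Δ * N - N * Δ = (2:ℝ) • Δ := by
    linear_combination (norm := module) -h₁₈
  have hΔM : Δ * M = M * Δ + (4:ℝ) • Δ := by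
    rw [hMdef]; linear_combination (norm := (noncomm_ring; try module)) (2:ℝ) • h₁₈'
  have hxd : x * d = -(d * x) := by
    linear_combination (norm := noncomm_ring) h₅
  have hyδ : y * δ = -(δ * y) := by
    linear_combination (norm := noncomm_ring) h₆
  have hΔx : Δ * x = x * Δ - (2:ℝ) • d := by
    linear_combination (norm := (noncomm_ring; try module)) h₁₂
  have hΔy : Δ * y = y * Δ + (2:ℝ) • δ := by
    linear_combination (norm := (noncomm_ring; try module)) h₁₃
  have h₉' : (d * y + y * d) - (δ * x + x * δ) = M + (4:ℝ) • (1 : A) := by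
    rw [hMdef]; linear_combination (norm := (noncomm_ring; try module)) h₉
  refine ⟨?_, ?_, ?_⟩
  · linear_combination (norm := (noncomm_ring; try module))
      d * hMd * M + h₁ * (M * M) - (2:ℝ) • (h₁ * M) + d * hMx * Δ + x * h₁₀ * M
        + x * d * hΔM + hxd * (M * Δ) + (4:ℝ) • (hxd * Δ) + x * hΔx * Δ
        + h₃ * (Δ * Δ) - (2:ℝ) • (hxd * Δ)
  · linear_combination (norm := (noncomm_ring; try module))
      δ * hMδ * M + h₂ * (M * M) - (2:ℝ) • (h₂ * M) - δ * hMy * Δ - y * h₁₁ * M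
        - y * δ * hΔM - hyδ * (M * Δ) - (4:ℝ) • (hyδ * Δ) + y * hΔy * Δ
        + h₄ * (Δ * Δ) + (2:ℝ) • (hyδ * Δ)
  · linear_combination (norm := (noncomm_ring; try module))
      -(δ * hMd * M) - d * hMδ * M - h₇ * (M * M) + (2:ℝ) • (h₇ * M)
        - hΔM * M - M * hΔM - (4:ℝ) • hΔM + (2:ℝ) • hΔM
        - δ * hMx * Δ - x * h₁₁ * M - x * δ * hΔM + d * hMy * Δ + y * h₁₀ * M
        + y * d * hΔM + x * hΔy * Δ + y * hΔx * Δ + h₉' * (M * Δ)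
        + (2:ℝ) • (h₉' * Δ) + h₈ * (Δ * Δ)
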